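/- arXiv:1707.08736 — 2 statements merged into one kernel-verified Lean document; each statement's English description precedes it below -/
import Mathlib

section
/- Given a CGS-SPC G and its corresponding CGS-EPC G′, for every path λ of G, a sequence λ′ of states of G′ satisfying λ[k] = λ′[2k] ∩ Φ = λ′[2k+1] ∩ Φ for all k is a path of G′ if and only if for every k there exists a G-action α[k] with τ(λ[k], α[k]) = λ[k+1] such that λ′[2k+1] is obtained from λ′[2k] by the joint action (α′₁,…,α′ₙ, +turn) and λ′[2k+2] is obtained from λ′[2k+1] by the joint action (∅,…,∅, τ(λ′[2k+1] ∩ Φ, α[k])), where α′ᵢ = {c_{ip} | p ∈ α[k]ᵢ} and +turn denotes the action of agent * setting the state's Φ-part unchanged and turn true. -/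
open Set
open scoped Classical

structure CGS (Agent : Type) (Atom : Type) where
  ctrl : Agent → Set Atom
  d : Agent → Set Atom → Set (Set Atom)
  trans : Set Atom → (Agent → Set Atom) → Set Atom

namespace CGS

variable {Agent Atom : Type}

/-- Well-formedness: nonempty protocol, and actions only use controlled atoms. -/
def WF (G : CGS Agent Atom) : Prop :=
  (∀ i s, (G.d i s).Nonempty) ∧ (∀ i s a, a ∈ G.d i s → a ⊆ G.ctrl i)

/-- Exclusive propositional control: disjoint, complete, and the transition is union. -/
def IsEPC (G : CGS Agent Atom) : Prop :=
  Pairwise (fun i j => Disjoint (G.ctrl i) (G.ctrl j)) ∧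
  (⋃ i, G.ctrl i) = Set.univ ∧
  ∀ s α, G.trans s α = ⋃ i, α i

def Act (G : CGS Agent Atom) (s : Set Atom) : Set (Agent → Set Atom) :=
  {α | ∀ i, α i ∈ G.d i s}

def Succ (G : CGS Agent Atom) (s : Set Atom) : Set (Set Atom) :=
  {t | ∃ α ∈ G.Act s, G.trans s α = t}

def IsPath (G : CGS Agent Atom) (lam : ℕ → Set Atom) : Prop :=
  ∀ k, lam (k + 1) ∈ G.Succ (lam k)

def ValidStrat (G : CGS Agent Atom) (C : Set Agent)
    (σ : Agent → Set Atom → Set Atom) : Prop :=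
  ∀ i ∈ C, ∀ s, σ i s ∈ G.d i s

def out (G : CGS Agent Atom) (C : Set Agent)
    (σ : Agent → Set Atom → Set Atom) (s : Set Atom) : Set (ℕ → Set Atom) :=
  {lam | lam 0 = s ∧ ∀ k, ∃ α ∈ G.Act (lam k),
    (∀ i ∈ C, α i = σ i (lam k)) ∧ lam (k + 1) = G.trans (lam k) α}

end CGS

/-- ATL* (path) formulas. -/
inductive Form (Agent Atom : Type) : Type where
  | atom : Atom → Form Agent Atom
  | neg : Form Agent Atom → Form Agent Atom
  | disj : Form Agent Atom → Form Agent Atom → Form Agent Atom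
  | next : Form Agent Atom → Form Agent Atom
  | untl : Form Agent Atom → Form Agent Atom → Form Agent Atom
  | coal : Set Agent → Form Agent Atom → Form Agent Atom

namespace Form

def size {Agent Atom : Type} : Form Agent Atom → ℕ
  | atom _ => 1
  | neg φ => φ.size + 1
  | disj φ ψ => φ.size + ψ.size + 1
  | next φ => φ.size + 1
  | untl φ ψ => φ.size + ψ.size + 1
  | coal _ φ => φ.size + 1

end Form

/-- State formulas of ATL*. -/
inductive IsStateForm {Agent Atom : Type} : Form Agent Atom → Prop where
  | atom (p : Atom) : IsStateForm (.atom p)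
  | neg {φ} : IsStateForm φ → IsStateForm (.neg φ)
  | disj {φ ψ} : IsStateForm φ → IsStateForm ψ → IsStateForm (.disj φ ψ)
  | coal (C : Set Agent) (φ : Form Agent Atom) : IsStateForm (.coal C φ)

def shiftSeq {α : Type} (lam : ℕ → α) (n : ℕ) : ℕ → α := fun k => lam (k + n)

/-- Satisfaction of an ATL* path formula along a computation (memoryless strategies). -/
def psat {Agent Atom : Type} (G : CGS Agent Atom) :
    Form Agent Atom → (ℕ → Set Atom) → Prop
  | .atom p, lam => p ∈ lam 0
  | .neg φ, lam => ¬ psat G φ lam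
  | .disj φ ψ, lam => psat G φ lam ∨ psat G ψ lam
  | .next φ, lam => psat G φ (shiftSeq lam 1)
  | .untl φ ψ, lam => ∃ n, psat G ψ (shiftSeq lam n) ∧ ∀ m < n, psat G φ (shiftSeq lam m)
  | .coal C φ, lam => ∃ σ, G.ValidStrat C σ ∧ ∀ μ ∈ G.out C σ (lam 0), psat G φ μ

/-- Satisfaction of an ATL* state formula at a state. -/
def ssat {Agent Atom : Type} (G : CGS Agent Atom) (φ : Form Agent Atom)
    (s : Set Atom) : Prop :=
  psat G φ (fun _ => s)

/-- Atoms of the associated exclusive-control structure: Φ ∪ {turn} ∪ {c_{ip}}. -/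
abbrev Atom2 (Agent Atom : Type) : Type := Atom ⊕ (Unit ⊕ Agent × Atom)

/-- Agents of the associated exclusive-control structure: N ∪ {*}. -/
abbrev Agent2 (Agent : Type) : Type := Agent ⊕ Unit

def turnV {Agent Atom : Type} : Atom2 Agent Atom := Sum.inr (Sum.inl ())

def baseV {Agent Atom : Type} (p : Atom) : Atom2 Agent Atom := Sum.inl p

def cV {Agent Atom : Type} (i : Agent) (p : Atom) : Atom2 Agent Atom :=
  Sum.inr (Sum.inr (i, p))

/-- Restriction of a state of `G'` to the atoms of `G` (s' ∩ Φ). -/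
def restr {Agent Atom : Type} (s' : Set (Atom2 Agent Atom)) : Set Atom :=
  {p | baseV (Agent := Agent) p ∈ s'}

/-- Canonical state: agrees with `s` on Φ, all other variables false. -/
def canonical {Agent Atom : Type} (s : Set Atom) : Set (Atom2 Agent Atom) :=
  Sum.inl '' s

/-- Read off a `G`-joint action from the `c_{ip}` variables of a `G'`-state. -/
def readAct {Agent Atom : Type} (G : CGS Agent Atom) (s' : Set (Atom2 Agent Atom)) :
    Agent → Set Atom :=
  fun i => {p | p ∈ G.ctrl i ∧ cV i p ∈ s'}

/-- The CGS-EPC `G'` corresponding to a CGS-SPC `G` (Definition 5 of the paper). -/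
noncomputable def epcOf {Agent Atom : Type} (G : CGS Agent Atom) :
    CGS (Agent2 Agent) (Atom2 Agent Atom) where
  ctrl := fun j =>
    match j with
    | Sum.inl i => {q | ∃ p ∈ G.ctrl i, q = cV i p}
    | Sum.inr _ => insert turnV (Set.range (baseV (Agent := Agent) (Atom := Atom)))
  d := fun j s' =>
    match j with
    | Sum.inl i =>
        if turnV ∈ s' then {∅}
        else {a | ∃ α ∈ G.d i (restr s'), a = cV i '' α}
    | Sum.inr _ =>
        if turnV ∈ s' then {baseV '' G.trans (restr s') (readAct G s')}
        else {insert turnV (baseV '' restr s')}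
  trans := fun _ α => ⋃ j, α j

/-- Joint `G'`-action (α'₁,…,α'ₙ,+turn) encoding a `G`-action α at state s'. -/
def encAct {Agent Atom : Type} (_G : CGS Agent Atom) (s' : Set (Atom2 Agent Atom))
    (α : Agent → Set Atom) : Agent2 Agent → Set (Atom2 Agent Atom) :=
  fun j =>
    match j with
    | Sum.inl i => cV i '' α i
    | Sum.inr _ => insert turnV (baseV '' restr s')

/-- Joint `G'`-action (∅,…,∅, τ(s' ∩ Φ, α)) performing the aggregation. -/
def aggAct {Agent Atom : Type} (G : CGS Agent Atom) (s' : Set (Atom2 Agent Atom))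
    (α : Agent → Set Atom) : Agent2 Agent → Set (Atom2 Agent Atom) :=
  fun j =>
    match j with
    | Sum.inl _ => ∅
    | Sum.inr _ => baseV '' G.trans (restr s') α

/-- Projection Π of a `G'`-path to a `G`-path: λ[k] = λ'[2k] ∩ Φ. -/
def projPath {Agent Atom : Type} (lam' : ℕ → Set (Atom2 Agent Atom)) : ℕ → Set Atom :=
  fun k => restr (lam' (2 * k))

/-- Condition (†): λ[k] = λ'[2k] ∩ Φ = λ'[2k+1] ∩ Φ for all k. -/
def Corr {Agent Atom : Type} (lam : ℕ → Set Atom)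
    (lam' : ℕ → Set (Atom2 Agent Atom)) : Prop :=
  ∀ k, restr (lam' (2 * k)) = lam k ∧ restr (lam' (2 * k + 1)) = lam k

/-- Canonical `G'`-path associated to a `G`-path. -/
def CanonPath {Agent Atom : Type} (G : CGS Agent Atom) (lam : ℕ → Set Atom)
    (lam' : ℕ → Set (Atom2 Agent Atom)) : Prop :=
  (epcOf G).IsPath lam' ∧ lam' 0 = canonical (lam 0) ∧ Corr lam lam'

/-- The translation `tr`: replaces X by XX, commutes with everything else. -/
def trF {Agent Atom : Type} : Form Agent Atom → Form (Agent2 Agent) (Atom2 Agent Atom)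
  | .atom p => .atom (baseV p)
  | .neg φ => .neg (trF φ)
  | .disj φ ψ => .disj (trF φ) (trF ψ)
  | .next φ => .next (.next (trF φ))
  | .untl φ ψ => .untl (trF φ) (trF ψ)
  | .coal C φ => .coal (Sum.inl '' C) (trF φ)

section Aux

variable {Agent Atom : Type}

lemma restr_baseV_image (t : Set Atom) :
    restr (Agent := Agent) (baseV '' t) = t := by
  ext p; simp [restr, baseV]

lemma main_step (G : CGS Agent Atom) (hWF : G.WF)
    (s' t' u' : Set (Atom2 Agent Atom)) (hts : turnV ∉ s')
    (h1 : t' ∈ (epcOf G).Succ s') (h2 : u' ∈ (epcOf G).Succ t') :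
    ∃ α : Agent → Set Atom,
      (∀ i, α i ∈ G.d i (restr s')) ∧
      u' = baseV '' G.trans (restr s') α ∧
      encAct G s' α ∈ (epcOf G).Act s' ∧
      t' = (epcOf G).trans s' (encAct G s' α) ∧
      aggAct G t' α ∈ (epcOf G).Act t' ∧
      u' = (epcOf G).trans t' (aggAct G t' α) := by
  obtain ⟨α', hα'Act, hα'tr⟩ := h1
  have hchoice : ∀ i, ∃ a ∈ G.d i (restr s'), α' (Sum.inl i) = cV i '' a := by
    intro i
    have := hα'Act (Sum.inl i)
    simpa [epcOf, hts] using this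
  choose α hαd hαe using hchoice
  have hstar : α' (Sum.inr ()) = insert turnV (baseV '' restr s') := by
    have := hα'Act (Sum.inr ())
    simpa [epcOf, hts] using this
  have hα'eq : α' = encAct G s' α := by
    funext j
    cases j with
    | inl i => exact hαe i
    | inr u => cases u; exact hstar
  have ht' : t' = (epcOf G).trans s' (encAct G s' α) := by
    rw [← hα'eq, hα'tr]
  have hmem : ∀ x, x ∈ t' ↔
      (∃ i, x ∈ cV i '' α i) ∨ x = turnV ∨ x ∈ baseV '' restr s' := by
    intro x
    rw [ht']
    simp only [epcOf, encAct, Set.mem_iUnion, Sum.exists]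
    constructor
    · rintro (⟨i, hi⟩ | ⟨u, hu⟩)
      · exact Or.inl ⟨i, hi⟩
      · rcases hu with h | h
        · exact Or.inr (Or.inl h)
        · exact Or.inr (Or.inr h)
    · rintro (⟨i, hi⟩ | h | h)
      · exact Or.inl ⟨i, hi⟩
      · exact Or.inr ⟨(), Or.inl h⟩
      · exact Or.inr ⟨(), Or.inr h⟩
  have hturn_t' : turnV ∈ t' := (hmem turnV).2 (Or.inr (Or.inl rfl))
  have hrestr_t' : restr t' = restr s' := by
    ext p
    simp only [restr, Set.mem_setOf_eq]
    rw [hmem]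
    constructor
    · rintro (⟨i, q, _, hq⟩ | h | h)
      · exact absurd hq.symm (by simp [baseV, cV])
      · exact absurd h (by simp [baseV, turnV])
      · rcases h with ⟨q, hq, hq'⟩
        have : q = p := by simpa [baseV] using hq'
        subst this; exact hq
    · intro h
      exact Or.inr (Or.inr ⟨p, h, rfl⟩)
  have hread : readAct G t' = α := by
    funext i
    ext p
    simp only [readAct, Set.mem_setOf_eq]
    constructor
    · rintro ⟨-, hc⟩
      rw [hmem] at hc
      rcases hc with ⟨i', q, hq, hq'⟩ | h | h
      · have hii : i' = i ∧ q = p := by simpa [cV, Prod.ext_iff] using hq'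
        rw [← hii.1, ← hii.2] at *; exact hq
      · exact absurd h (by simp [cV, turnV])
      · rcases h with ⟨q, _, hq'⟩; exact absurd hq' (by simp [baseV, cV])
    · intro hp
      refine ⟨hWF.2 i (restr s') (α i) (hαd i) hp, ?_⟩
      rw [hmem]
      exact Or.inl ⟨i, p, hp, rfl⟩
  obtain ⟨β, hβAct, hβtr⟩ := h2
  have hβl : ∀ i, β (Sum.inl i) = ∅ := by
    intro i
    have := hβAct (Sum.inl i)
    simpa [epcOf, hturn_t'] using this
  have hβr : β (Sum.inr ()) = baseV '' G.trans (restr t') (readAct G t') := by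
    have := hβAct (Sum.inr ())
    simpa [epcOf, hturn_t'] using this
  have hβeq : β = aggAct G t' α := by
    funext j
    cases j with
    | inl i => exact hβl i
    | inr u => cases u; rw [hβr, hread]; rfl
  have hu' : u' = (epcOf G).trans t' (aggAct G t' α) := by
    rw [← hβeq, hβtr]
  have huval : u' = baseV '' G.trans (restr s') α := by
    rw [hu']
    ext x
    simp only [epcOf, aggAct, Set.mem_iUnion, Sum.exists]
    constructor
    · rintro (⟨i, hi⟩ | ⟨u, hu⟩)
      · exact absurd hi (by simp)
      · rwa [hrestr_t'] at hu
    · intro hx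
      exact Or.inr ⟨(), by rwa [hrestr_t']⟩
  refine ⟨α, hαd, huval, ?_, ht', ?_, hu'⟩
  · intro j
    cases j with
    | inl i =>
      simp only [encAct, epcOf, hts, if_neg hts]
      exact ⟨α i, hαd i, rfl⟩
    | inr u =>
      cases u
      simp [encAct, epcOf, hts]
  · intro j
    cases j with
    | inl i => simp [aggAct, epcOf, hturn_t']
    | inr u =>
      cases u
      simp only [aggAct, epcOf, if_pos hturn_t', hread, Set.mem_singleton_iff]

end Aux

/-- characterisation of associated `G'`-paths (Lemma 1.2):
a sequence satisfying (†) is a path of `G'` iff every double step is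
generated by encoding a `G`-action and then aggregating. -/
theorem assoc_path_characterisation {Agent Atom : Type} (G : CGS Agent Atom)
    (hWF : G.WF) (lam : ℕ → Set Atom) (hlam : G.IsPath lam)
    (lam' : ℕ → Set (Atom2 Agent Atom)) (hcorr : Corr lam lam')
    (hturn : turnV ∉ lam' 0) :
    (epcOf G).IsPath lam' ↔
      ∀ k, ∃ α : Agent → Set Atom,
        (∀ i, α i ∈ G.d i (lam k)) ∧ G.trans (lam k) α = lam (k + 1) ∧
        encAct G (lam' (2 * k)) α ∈ (epcOf G).Act (lam' (2 * k)) ∧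
        lam' (2 * k + 1) = (epcOf G).trans (lam' (2 * k)) (encAct G (lam' (2 * k)) α) ∧
        aggAct G (lam' (2 * k + 1)) α ∈ (epcOf G).Act (lam' (2 * k + 1)) ∧
        lam' (2 * k + 2) =
          (epcOf G).trans (lam' (2 * k + 1)) (aggAct G (lam' (2 * k + 1)) α) := by
  constructor
  · intro hpath
    have key : ∀ k, turnV ∉ lam' (2 * k) →
        ∃ α : Agent → Set Atom,
          (∀ i, α i ∈ G.d i (restr (lam' (2 * k)))) ∧
          lam' (2 * k + 2) = baseV '' G.trans (restr (lam' (2 * k))) α ∧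
          encAct G (lam' (2 * k)) α ∈ (epcOf G).Act (lam' (2 * k)) ∧
          lam' (2 * k + 1) = (epcOf G).trans (lam' (2 * k)) (encAct G (lam' (2 * k)) α) ∧
          aggAct G (lam' (2 * k + 1)) α ∈ (epcOf G).Act (lam' (2 * k + 1)) ∧
          lam' (2 * k + 2) =
            (epcOf G).trans (lam' (2 * k + 1)) (aggAct G (lam' (2 * k + 1)) α) := by
      intro k hts
      have h1 := hpath (2 * k)
      have h2 := hpath (2 * k + 1)
      exact main_step G hWF _ _ _ hts h1 h2
    have hnt : ∀ k, turnV ∉ lam' (2 * k) := by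
      intro k
      induction k with
      | zero => simpa using hturn
      | succ n ih =>
        obtain ⟨α, -, hu, -⟩ := key n ih
        have : 2 * (n + 1) = 2 * n + 2 := by ring
        rw [this, hu]
        simp [turnV, baseV]
    intro k
    obtain ⟨α, hαd, hu, hact1, heq1, hact2, heq2⟩ := key k (hnt k)
    have hres : restr (lam' (2 * k)) = lam k := (hcorr k).1
    refine ⟨α, ?_, ?_, hact1, heq1, hact2, ?_⟩
    · intro i; rw [← hres]; exact hαd i
    · have : restr (lam' (2 * k + 2)) = G.trans (restr (lam' (2 * k))) α := by
        rw [hu, restr_baseV_image]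
      have h2 : restr (lam' (2 * (k + 1))) = lam (k + 1) := (hcorr (k + 1)).1
      rw [show 2 * (k + 1) = 2 * k + 2 by ring] at h2
      rw [← hres, ← this, h2]
    · rwa [show 2 * k + 2 = 2 * k + 1 + 1 by ring] at heq2
  · intro h n
    rcases Nat.even_or_odd n with ⟨m, hm⟩ | ⟨m, hm⟩
    · obtain ⟨α, -, -, hact1, heq1, -, -⟩ := h m
      have hn : n = 2 * m := by omega
      subst hn
      exact ⟨encAct G (lam' (2 * m)) α, hact1, heq1.symm⟩
    · obtain ⟨α, -, -, -, -, hact2, heq2⟩ := h m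
      have hn : n = 2 * m + 1 := by omega
      subst hn
      rw [show 2 * m + 1 + 1 = 2 * m + 2 by ring]
      exact ⟨aggAct G (lam' (2 * m + 1)) α, hact2, heq2.symm⟩
end

section
/- Given a CGS-SPC G and its corresponding CGS-EPC G′, for every joint memoryless strategy σ_C of a coalition C ⊆ N in G there exists a joint memoryless strategy σ′_C in G′ such that for every state s of G, the projection Π(out(s′⋆, σ′_C)) = out(s, σ_C), where s′⋆ is the canonical state associated to s and Π maps each G′-path λ′ to the G-path λ with λ[k] = λ′[2k] ∩ Φ. -/
open Set
open scoped Classical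

section AuxLift

variable {Agent Atom : Type}

/-- Middle (odd) state of the simulation path. -/
def midState (s : Set Atom) (α : Agent → Set Atom) : Set (Atom2 Agent Atom) :=
  insert turnV (baseV '' s) ∪ ⋃ i, cV i '' α i

lemma cV_inj (i : Agent) : Function.Injective (cV (Atom := Atom) i) := by
  intro p q h
  simpa [cV, Prod.ext_iff] using h

lemma restr_canonical (s : Set Atom) : restr (Agent := Agent) (canonical s) = s := by
  ext p; simp [restr, canonical, baseV]

lemma turn_not_canonical (s : Set Atom) : turnV ∉ canonical (Agent := Agent) s := by
  simp [canonical, turnV]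

lemma turn_mem_mid (s : Set Atom) (α : Agent → Set Atom) : turnV ∈ midState s α := by
  simp [midState]

lemma restr_mid (s : Set Atom) (α : Agent → Set Atom) : restr (midState s α) = s := by
  ext p
  simp [restr, midState, turnV, baseV, cV]

lemma readAct_mid (G : CGS Agent Atom) (s : Set Atom) (α : Agent → Set Atom)
    (hα : ∀ i, α i ⊆ G.ctrl i) : readAct G (midState s α) = α := by
  funext i; ext p
  simp only [readAct, midState, Set.mem_setOf_eq, Set.mem_union, Set.mem_insert_iff,
    Set.mem_iUnion, Set.mem_image]
  constructor
  · rintro ⟨hc, (h | h) | ⟨j, q, hq, hE⟩⟩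
    · exact absurd h (by simp [cV, turnV])
    · rcases h with ⟨q, _, hq⟩
      exact absurd hq (by simp [cV, baseV])
    · obtain ⟨h1, h2⟩ : j = i ∧ q = p := by simpa [cV, Prod.ext_iff] using hE
      subst h1; subst h2
      exact hq
  · intro hp
    exact ⟨hα i hp, Or.inr ⟨i, p, hp, rfl⟩⟩

lemma iUnion_agent2 (f : Agent2 Agent → Set (Atom2 Agent Atom)) :
    (⋃ j, f j) = f (Sum.inr ()) ∪ ⋃ i, f (Sum.inl i) := by
  ext x
  simp only [Set.mem_iUnion, Set.mem_union]
  constructor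
  · rintro ⟨j, hj⟩
    cases j with
    | inl i => exact Or.inr ⟨i, hj⟩
    | inr u => cases u; exact Or.inl hj
  · rintro (h | ⟨i, hi⟩)
    exacts [⟨Sum.inr (), h⟩, ⟨Sum.inl i, hi⟩]

/-- The lifted (witnessing) strategy. -/
noncomputable def liftStrat (_G : CGS Agent Atom) (σ : Agent → Set Atom → Set Atom) :
    Agent2 Agent → Set (Atom2 Agent Atom) → Set (Atom2 Agent Atom) :=
  fun j s' =>
    match j with
    | Sum.inl i => if turnV ∈ s' then ∅ else cV i '' σ i (restr s')
    | Sum.inr _ => ∅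

/-- Two consecutive steps of an outcome path in `epcOf G` simulate one `G`-step. -/
lemma lift_out_step (G : CGS Agent Atom) (hWF : G.WF) (C : Set Agent)
    (σ : Agent → Set Atom → Set Atom)
    (lam' : ℕ → Set (Atom2 Agent Atom)) (k : ℕ) (t : Set Atom)
    (h2k : lam' (2 * k) = canonical t)
    (hstep : ∀ m, ∃ α' ∈ (epcOf G).Act (lam' m),
        (∀ j ∈ Sum.inl '' C, α' j = liftStrat G σ j (lam' m)) ∧
        lam' (m + 1) = (epcOf G).trans (lam' m) α') :
    ∃ α ∈ G.Act t, (∀ i ∈ C, α i = σ i t) ∧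
      lam' (2 * k + 2) = canonical (G.trans t α) := by
  classical
  obtain ⟨α', hAct, hC, hnext⟩ := hstep (2 * k)
  have hturn : turnV ∉ lam' (2 * k) := h2k ▸ turn_not_canonical t
  have hrestr : restr (lam' (2 * k)) = t := by rw [h2k]; exact restr_canonical t
  have hαi : ∀ i, ∃ a ∈ G.d i t, α' (Sum.inl i) = cV i '' a := by
    intro i
    have h := hAct (Sum.inl i)
    simp only [epcOf, if_neg hturn, Set.mem_setOf_eq, hrestr] at h
    exact h
  choose α hαd hαe using hαi
  have hinr : α' (Sum.inr ()) = insert turnV (baseV '' t) := by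
    have h := hAct (Sum.inr ())
    simp only [epcOf, if_neg hturn, hrestr, Set.mem_singleton_iff] at h
    simpa using h
  have hmid : lam' (2 * k + 1) = midState t α := by
    rw [hnext]
    show (⋃ j, α' j) = _
    rw [iUnion_agent2, hinr, midState]
    congr 1
    exact Set.iUnion_congr hαe
  have hctrl : ∀ i, α i ⊆ G.ctrl i := fun i => hWF.2 i t (α i) (hαd i)
  obtain ⟨β', hAct2, _, hnext2⟩ := hstep (2 * k + 1)
  have hturn2 : turnV ∈ lam' (2 * k + 1) := by rw [hmid]; exact turn_mem_mid t α
  have hβinl : ∀ i, β' (Sum.inl i) = ∅ := by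
    intro i
    have h := hAct2 (Sum.inl i)
    simpa only [epcOf, if_pos hturn2, Set.mem_singleton_iff] using h
  have hβinr : β' (Sum.inr ()) = baseV '' G.trans t α := by
    have h := hAct2 (Sum.inr ())
    simp only [epcOf, hmid, restr_mid, readAct_mid G t α hctrl,
      if_pos (turn_mem_mid t α), Set.mem_singleton_iff] at h
    simpa using h
  refine ⟨α, hαd, ?_, ?_⟩
  · intro i hiC
    have h := hC (Sum.inl i) ⟨i, hiC, rfl⟩
    rw [hαe i] at h
    simp only [liftStrat, if_neg hturn, hrestr] at h
    exact (Set.image_eq_image (cV_inj i)).mp h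
  · rw [hnext2]
    show (⋃ j, β' j) = _
    rw [iUnion_agent2, hβinr]
    simp [hβinl, canonical, baseV]
    rfl

end AuxLift

/-- Lemma 2.1: every joint strategy of `G` is simulated by one of `G'`:
the projections of the outcome paths from the canonical state coincide with the
outcomes in `G`. -/
theorem strategy_lift_to_epcOf {Agent Atom : Type} (G : CGS Agent Atom)
    (hWF : G.WF) (C : Set Agent) (σ : Agent → Set Atom → Set Atom)
    (hσ : G.ValidStrat C σ) :
    ∃ σ' : Agent2 Agent → Set (Atom2 Agent Atom) → Set (Atom2 Agent Atom),
      (epcOf G).ValidStrat (Sum.inl '' C) σ' ∧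
      ∀ s : Set Atom,
        projPath '' ((epcOf G).out (Sum.inl '' C) σ' (canonical s)) =
          G.out C σ s := by
  classical
  refine ⟨liftStrat G σ, ?_, ?_⟩
  · rintro j ⟨i, hiC, rfl⟩ s'
    by_cases ht : turnV ∈ s'
    · simp [liftStrat, epcOf, ht]
    · simp only [liftStrat, if_neg ht]
      show _ ∈ (epcOf G).d (Sum.inl i) s'
      simp only [epcOf, if_neg ht, Set.mem_setOf_eq]
      exact ⟨σ i (restr s'), hσ i hiC (restr s'), rfl⟩
  · intro s
    ext lam
    constructor
    · rintro ⟨lam', hlam', rfl⟩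
      obtain ⟨h0, hstep⟩ := hlam'
      -- every even state is canonical
      have hcan : ∀ k, lam' (2 * k) = canonical (projPath lam' k) := by
        intro k
        induction k with
        | zero =>
            simp only [projPath, Nat.mul_zero, h0, restr_canonical]
        | succ n ih =>
            obtain ⟨α, _, _, hnc⟩ :=
              lift_out_step G hWF C σ lam' n (projPath lam' n) ih hstep
            have h2 : 2 * (n + 1) = 2 * n + 2 := by ring
            rw [h2, hnc]
            simp only [projPath, h2, hnc, restr_canonical]
      refine ⟨?_, ?_⟩
      · simp only [projPath, Nat.mul_zero, h0, restr_canonical]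
      · intro k
        obtain ⟨α, hAct, hC, hnc⟩ :=
          lift_out_step G hWF C σ lam' k (projPath lam' k) (hcan k) hstep
        refine ⟨α, hAct, hC, ?_⟩
        have h2 : 2 * (k + 1) = 2 * k + 2 := by ring
        simp only [projPath, h2, hnc, restr_canonical]
    · rintro ⟨h0, hlam⟩
      choose α hAct hC hnext using hlam
      set lam' : ℕ → Set (Atom2 Agent Atom) := fun n =>
        if n % 2 = 0 then canonical (lam (n / 2))
        else midState (lam (n / 2)) (α (n / 2)) with hlam'def
      have heven : ∀ k, lam' (2 * k) = canonical (lam k) := by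
        intro k
        have h1 : (2 * k) % 2 = 0 := by omega
        have h2 : (2 * k) / 2 = k := by omega
        simp [hlam'def, h1, h2]
      have hodd : ∀ k, lam' (2 * k + 1) = midState (lam k) (α k) := by
        intro k
        have h1 : (2 * k + 1) % 2 ≠ 0 := by omega
        have h2 : (2 * k + 1) / 2 = k := by omega
        simp [hlam'def, h1, h2]
      refine ⟨lam', ⟨?_, ?_⟩, ?_⟩
      · have := heven 0
        simpa [h0] using this
      · intro m
        rcases Nat.even_or_odd m with ⟨q, hq⟩ | ⟨q, hq⟩
        · -- even step: play the encoded action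
          have hm : m = 2 * q := by omega
          subst hm
          have hturn : turnV ∉ lam' (2 * q) := by
            rw [heven q]; exact turn_not_canonical _
          have hrestr : restr (lam' (2 * q)) = lam q := by
            rw [heven q]; exact restr_canonical _
          refine ⟨fun j => match j with
            | Sum.inl i => cV i '' α q i
            | Sum.inr _ => insert turnV (baseV '' lam q), ?_, ?_, ?_⟩
          · intro j
            cases j with
            | inl i =>
                show _ ∈ (epcOf G).d (Sum.inl i) (lam' (2 * q))
                simp only [epcOf, if_neg hturn, Set.mem_setOf_eq, hrestr]
                exact ⟨α q i, hAct q i, rfl⟩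
            | inr u =>
                show _ ∈ (epcOf G).d (Sum.inr u) (lam' (2 * q))
                simp only [epcOf, if_neg hturn, hrestr, Set.mem_singleton_iff]
          · rintro j ⟨i, hiC, rfl⟩
            simp only [liftStrat, if_neg hturn, hrestr, hC q i hiC]
          · show lam' (2 * q + 1) = ⋃ j, _
            rw [hodd q, iUnion_agent2, midState]
        · -- odd step: aggregation
          have hm : m = 2 * q + 1 := by omega
          subst hm
          have hturn : turnV ∈ lam' (2 * q + 1) := by
            rw [hodd q]; exact turn_mem_mid _ _
          have hctrl : ∀ i, α q i ⊆ G.ctrl i := fun i => hWF.2 i (lam q) _ (hAct q i)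
          refine ⟨fun j => match j with
            | Sum.inl _ => ∅
            | Sum.inr _ => baseV '' G.trans (lam q) (α q), ?_, ?_, ?_⟩
          · intro j
            cases j with
            | inl i =>
                show _ ∈ (epcOf G).d (Sum.inl i) (lam' (2 * q + 1))
                simp only [epcOf, if_pos hturn, Set.mem_singleton_iff]
            | inr u =>
                show _ ∈ (epcOf G).d (Sum.inr u) (lam' (2 * q + 1))
                simp only [epcOf, hodd q, restr_mid, readAct_mid G (lam q) (α q) hctrl,
                  if_pos (turn_mem_mid (lam q) (α q)), Set.mem_singleton_iff]
          · rintro j ⟨i, hiC, rfl⟩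
            simp only [liftStrat, if_pos hturn]
          · show lam' (2 * q + 1 + 1) = ⋃ j, _
            have h2 : 2 * q + 1 + 1 = 2 * (q + 1) := by ring
            rw [h2, heven (q + 1), iUnion_agent2]
            simp [hnext q, canonical, baseV]
            rfl
      · funext k
        simp only [projPath, heven k, restr_canonical]
end
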